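/- Generalized Karlin–Rubin via Bayes factors: let {p(·|θ)} be a family of positive densities on ℝ, θ_C ∈ ℝ, ν₀ a probability measure on (−∞, θ_C]. Suppose that for every probability measure ν₁ on (θ_C, ∞), the Bayes factor B_{ν₁}(t) = (∫ p(t|θ)dν₁)/(∫ p(t|θ)dν₀) is non-decreasing in t. Then for any t₀, the region R = {t ≥ t₀} satisfies: for every θ₁ > θ_C and every measurable S with ∫_S (∫ p(t|θ)dν₀) dt ≤ ∫_R (∫ p(t|θ)dν₀) dt, one has ∫_S p(t|θ₁) dt ≤ ∫_R p(t|θ₁) dt. (The threshold test is uniformly most powerful among tests of no larger expected size, for every alternative parameter value.) -/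

import Mathlib

open MeasureTheory ENNReal NNReal

/-- Generalized Karlin–Rubin via Bayes factors: if every Bayes factor against
the fixed null prior is non-decreasing, the threshold test is uniformly most
powerful among tests of no larger expected size, for every alternative
parameter value. -/
theorem generalized_karlin_rubin
    (p : ℝ → ℝ → ℝ≥0∞) (hp : Measurable (Function.uncurry p))
    (hppos : ∀ θ t, 0 < p θ t) (hpfin : ∀ θ t, p θ t < ⊤)
    (hp1 : ∀ θ, ∫⁻ t, p θ t = 1)
    (θC : ℝ) (ν₀ : Measure ℝ) [IsProbabilityMeasure ν₀]
    (hν₀ : ν₀ (Set.Iic θC)ᶜ = 0)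
    (hBmono : ∀ ν₁ : Measure ℝ, IsProbabilityMeasure ν₁ → ν₁ (Set.Ioi θC)ᶜ = 0 →
      Monotone fun t => (∫⁻ θ, p θ t ∂ν₁) / (∫⁻ θ, p θ t ∂ν₀))
    (t₀ : ℝ) (θ₁ : ℝ) (hθ₁ : θC < θ₁)
    (S : Set ℝ) (hS : MeasurableSet S)
    (hsize : ∫⁻ t in S, (∫⁻ θ, p θ t ∂ν₀) ≤ ∫⁻ t in Set.Ici t₀, (∫⁻ θ, p θ t ∂ν₀)) :
    ∫⁻ t in S, p θ₁ t ≤ ∫⁻ t in Set.Ici t₀, p θ₁ t := by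
  set m₀ : ℝ → ℝ≥0∞ := fun t => ∫⁻ θ, p θ t ∂ν₀ with hm₀def
  have hm₀meas : Measurable m₀ := hp.lintegral_prod_left
  have hpθ₁ : Measurable fun t => p θ₁ t := by
    have : (fun t => p θ₁ t) = Function.uncurry p ∘ fun t => (θ₁, t) := rfl
    rw [this]; exact hp.comp (measurable_const.prodMk measurable_id)
  have hpθmeas : ∀ t, Measurable fun θ => p θ t := fun t => by
    have : (fun θ => p θ t) = Function.uncurry p ∘ fun θ => (θ, t) := rfl
    rw [this]; exact hp.comp (measurable_id.prodMk measurable_const)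
  -- Bayes factor against point mass at θ₁
  have hB : Monotone fun t => p θ₁ t / m₀ t := by
    have h1 : (Measure.dirac θ₁) (Set.Ioi θC)ᶜ = 0 := by
      rw [Measure.dirac_apply' _ (measurableSet_Ioi.compl)]
      simp [Set.indicator, hθ₁]
    have := hBmono (Measure.dirac θ₁) (by infer_instance) h1
    convert this using 2 with t
    rw [lintegral_dirac' _ (hpθmeas t)]
  -- m₀ is everywhere positive
  have hm₀pos : ∀ t, 0 < m₀ t := by
    intro t
    rw [hm₀def, lintegral_pos_iff_support (hpθmeas t)]
    have : (Function.support fun θ => p θ t) = Set.univ := by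
      ext θ; simp [(hppos θ t).ne']
    rw [this]; simp
  -- total mass of m₀ is 1, so m₀ is a.e. finite and set integrals are finite
  have hm₀tot : ∫⁻ t, m₀ t = 1 := by
    rw [hm₀def, ← lintegral_lintegral_swap hp.aemeasurable]
    simp [hp1]
  have hm₀aefin : ∀ᵐ t, m₀ t < ⊤ :=
    ae_lt_top hm₀meas (by rw [hm₀tot]; exact one_ne_top)
  have hβfin : ∀ A : Set ℝ, ∫⁻ t in A, m₀ t ≠ ⊤ := by
    intro A
    refine ne_top_of_le_ne_top one_ne_top ?_
    rw [← hm₀tot]; exact setLIntegral_le_lintegral _ _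
  set k : ℝ≥0∞ := p θ₁ t₀ / m₀ t₀ with hkdef
  have hkfin : k ≠ ⊤ :=
    (ENNReal.div_lt_top (hpfin θ₁ t₀).ne (hm₀pos t₀).ne').ne
  -- Claim A: for t ≥ t₀, k * m₀ t ≤ p θ₁ t
  have hA : ∀ t, t₀ ≤ t → k * m₀ t ≤ p θ₁ t := by
    intro t ht
    have hBt : k ≤ p θ₁ t / m₀ t := hB ht
    rcases eq_or_ne (m₀ t) ⊤ with hfin | hfin
    · have : p θ₁ t / m₀ t = 0 := by
        rw [hfin]; exact ENNReal.div_top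
      have hk0 : k = 0 := le_antisymm (this ▸ hBt) zero_le
      simp [hk0]
    · exact (ENNReal.le_div_iff_mul_le (Or.inl (hm₀pos t).ne') (Or.inl hfin)).mp hBt
  -- Claim B: for t < t₀ with m₀ t finite, p θ₁ t ≤ k * m₀ t
  have hBle : ∀ t, t < t₀ → m₀ t < ⊤ → p θ₁ t ≤ k * m₀ t := by
    intro t ht hfin
    have hBt : p θ₁ t / m₀ t ≤ k := hB ht.le
    exact (ENNReal.div_le_iff_le_mul (Or.inl (hm₀pos t).ne') (Or.inl hfin.ne)).mp hBt
  -- decompose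
  set R : Set ℝ := Set.Ici t₀ with hRdef
  have hR : MeasurableSet R := measurableSet_Ici
  have split : ∀ (f : ℝ → ℝ≥0∞) (A B : Set ℝ), MeasurableSet B →
      ∫⁻ t in A, f t = (∫⁻ t in A ∩ B, f t) + ∫⁻ t in A \ B, f t := by
    intro f A B hB
    rw [lintegral_inter_add_diff f A hB]
  have hαS := split (fun t => p θ₁ t) S R hR
  have hαR := split (fun t => p θ₁ t) R S hS
  have hβS := split m₀ S R hR
  have hβR := split m₀ R S hS
  -- key comparison on the differences
  have h1 : ∫⁻ t in S \ R, p θ₁ t ≤ k * ∫⁻ t in S \ R, m₀ t := by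
    rw [← lintegral_const_mul k hm₀meas]
    refine lintegral_mono_ae ?_
    filter_upwards [ae_restrict_mem (hS.diff hR), ae_restrict_of_ae hm₀aefin]
      with t htmem htfin
    exact hBle t (by simpa [hRdef] using htmem.2) htfin
  have h2 : k * ∫⁻ t in R \ S, m₀ t ≤ ∫⁻ t in R \ S, p θ₁ t := by
    rw [← lintegral_const_mul k hm₀meas]
    refine lintegral_mono_ae ?_
    filter_upwards [ae_restrict_mem (hR.diff hS)] with t htmem
    exact hA t htmem.1
  have hβdiff : ∫⁻ t in S \ R, m₀ t ≤ ∫⁻ t in R \ S, m₀ t := by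
    have h := hsize
    rw [hβS, hβR, Set.inter_comm R S] at h
    exact ENNReal.le_of_add_le_add_left (hβfin (S ∩ R)) h
  have hmid : k * ∫⁻ t in S \ R, m₀ t ≤ k * ∫⁻ t in R \ S, m₀ t :=
    mul_le_mul_right hβdiff k
  have hdiff : ∫⁻ t in S \ R, p θ₁ t ≤ ∫⁻ t in R \ S, p θ₁ t :=
    h1.trans (hmid.trans h2)
  rw [hαS, hαR, Set.inter_comm R S]
  exact add_le_add le_rfl hdiff
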